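/- Fix f(r)=r and a Riemannian point q₀∈ℝ³ with r₀=√(x₀²+y₀²)>0. Let γ be an arc-length parametrized normal geodesic from q₀ with initial covector λ₀=(u₀,v₀,w₀) on the unit energy shell E₁={λ₀ : u₀²+v₀²+r₀²w₀²=1}. Then the first conjugate time of γ is t_con(γ) = π/|w₀|, with the convention t_con(γ)=+∞ for the straight-line geodesics with w₀=0. -/

import Mathlib

noncomputable section

/-- `γ` is a normal geodesic of the radial Grushin structure with `f(r) = r`,
with initial covector `lam = (u₀,v₀,w₀)`: it is the projection of a solution of the
Hamiltonian system `ẋ=u, ẏ=v, ż=(x²+y²)w₀, u̇=−w₀²x, v̇=−w₀²y`. -/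
def IsGrushinGeodesic (γ : ℝ → ℝ × ℝ × ℝ) (lam : ℝ × ℝ × ℝ) : Prop :=
  ∃ u v : ℝ → ℝ, u 0 = lam.1 ∧ v 0 = lam.2.1 ∧
    (∀ t, HasDerivAt (fun s => (γ s).1) (u t) t) ∧
    (∀ t, HasDerivAt (fun s => (γ s).2.1) (v t) t) ∧
    (∀ t, HasDerivAt (fun s => (γ s).2.2) (((γ t).1 ^ 2 + (γ t).2.1 ^ 2) * lam.2.2) t) ∧
    (∀ t, HasDerivAt u (-(lam.2.2 ^ 2) * (γ t).1) t) ∧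
    (∀ t, HasDerivAt v (-(lam.2.2 ^ 2) * (γ t).2.1) t)


open Real Filter

/-- Uniqueness for the harmonic oscillator `x'' = -w² x`. -/
lemma osc_unique (w : ℝ) (hw : w ≠ 0) (x uf : ℝ → ℝ) (a b : ℝ)
    (hx : ∀ t, HasDerivAt x (uf t) t)
    (hu : ∀ t, HasDerivAt uf (-(w ^ 2) * x t) t)
    (hx0 : x 0 = a) (hu0 : uf 0 = b) :
    ∀ t, x t = a * cos (w * t) + (b / w) * sin (w * t) := by
  set X : ℝ → ℝ := fun t => a * cos (w * t) + (b / w) * sin (w * t) with hX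
  set X' : ℝ → ℝ := fun t => -(a * w) * sin (w * t) + b * cos (w * t) with hX'
  have hlin : ∀ t : ℝ, HasDerivAt (fun s : ℝ => w * s) w t := by
    intro t
    simpa using (hasDerivAt_id t).const_mul w
  have hXd : ∀ t, HasDerivAt X (X' t) t := by
    intro t
    have h1 := ((Real.hasDerivAt_cos (w * t)).comp t (hlin t)).const_mul a
    have h2 := ((Real.hasDerivAt_sin (w * t)).comp t (hlin t)).const_mul (b / w)
    have := h1.add h2
    refine this.congr_deriv (Eq.symm ?_)
    field_simp
    ring
  have hX'd : ∀ t, HasDerivAt X' (-(w ^ 2) * X t) t := by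
    intro t
    have h1 := ((Real.hasDerivAt_sin (w * t)).comp t (hlin t)).const_mul (-(a * w))
    have h2 := ((Real.hasDerivAt_cos (w * t)).comp t (hlin t)).const_mul b
    have := h1.add h2
    refine this.congr_deriv (Eq.symm ?_)
    simp only [hX]
    field_simp
    ring
  set e : ℝ → ℝ := fun t => (uf t - X' t) ^ 2 + w ^ 2 * (x t - X t) ^ 2 with he
  have hed : ∀ t, HasDerivAt e 0 t := by
    intro t
    have h1 := (((hu t).sub (hX'd t)).const_mul 2).mul ((hx t).sub (hXd t))
    have h2 := (((hx t).sub (hXd t)).pow 2).const_mul (w ^ 2)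
    have h3 := ((((hu t).sub (hX'd t)).pow 2)).add h2
    refine h3.congr_deriv (Eq.symm ?_)
    simp only [Pi.sub_apply]; ring
  have hconst : ∀ t, e t = e 0 := by
    intro t
    exact is_const_of_deriv_eq_zero (fun s => (hed s).differentiableAt)
      (fun s => (hed s).deriv) t 0
  have he0 : e 0 = 0 := by
    simp [he, hx0, hu0, hX, hX']
  intro t
  have h := hconst t
  rw [he0] at h
  simp only [he] at h
  have hw2 : 0 < w ^ 2 := by positivity
  have hzero : (x t - X t) ^ 2 = 0 := by
    nlinarith [sq_nonneg (uf t - X' t), sq_nonneg (x t - X t)]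
  have := pow_eq_zero_iff (n := 2) (by norm_num) |>.mp hzero
  have hxt : x t = X t := by linarith [sub_eq_zero.mp this]
  simpa [hX] using hxt

lemma grushin_E_formula (x₀ y₀ z₀ : ℝ) (E : ℝ × ℝ × ℝ → ℝ × ℝ × ℝ)
    (hE0 : E 0 = (x₀, y₀, z₀))
    (hgeo : ∀ lam : ℝ × ℝ × ℝ, IsGrushinGeodesic (fun t => E (t • lam)) lam)
    (u v w : ℝ) (hw : w ≠ 0) :
    E (u, v, w) = (x₀ * cos w + (u / w) * sin w,
      y₀ * cos w + (v / w) * sin w,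
      z₀ + ((x₀ ^ 2 + y₀ ^ 2) / 2) * (w + sin w * cos w)
        + (x₀ * (u / w) + y₀ * (v / w)) * sin w ^ 2
        + (((u / w) ^ 2 + (v / w) ^ 2) / 2) * (w - sin w * cos w)) := by
  obtain ⟨uf, vf, hu0, hv0, hx, hy, hz, hu', hv'⟩ := hgeo (u, v, w)
  have h0 : ((0:ℝ) • ((u, v, w) : ℝ × ℝ × ℝ)) = 0 := zero_smul _ _
  have hx0 : (E ((0:ℝ) • ((u, v, w) : ℝ × ℝ × ℝ))).1 = x₀ := by rw [h0, hE0]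
  have hy0 : (E ((0:ℝ) • ((u, v, w) : ℝ × ℝ × ℝ))).2.1 = y₀ := by rw [h0, hE0]
  have hz0 : (E ((0:ℝ) • ((u, v, w) : ℝ × ℝ × ℝ))).2.2 = z₀ := by rw [h0, hE0]
  have hxall : ∀ t : ℝ, (E (t • ((u,v,w) : ℝ×ℝ×ℝ))).1
      = x₀ * cos (w * t) + (u / w) * sin (w * t) :=
    osc_unique w hw (fun s => (E (s • ((u,v,w) : ℝ×ℝ×ℝ))).1) uf x₀ u hx hu' hx0 hu0
  have hyall : ∀ t : ℝ, (E (t • ((u,v,w) : ℝ×ℝ×ℝ))).2.1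
      = y₀ * cos (w * t) + (v / w) * sin (w * t) :=
    osc_unique w hw (fun s => (E (s • ((u,v,w) : ℝ×ℝ×ℝ))).2.1) vf y₀ v hy hv' hy0 hv0
  -- closed-form z
  set X : ℝ → ℝ := fun t => x₀ * cos (w * t) + (u / w) * sin (w * t) with hXdef
  set Y : ℝ → ℝ := fun t => y₀ * cos (w * t) + (v / w) * sin (w * t) with hYdef
  set Z : ℝ → ℝ := fun t => z₀ + ((x₀ ^ 2 + y₀ ^ 2) / 2) * (w * t + sin (w * t) * cos (w * t))
      + (x₀ * (u / w) + y₀ * (v / w)) * sin (w * t) ^ 2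
      + (((u / w) ^ 2 + (v / w) ^ 2) / 2) * (w * t - sin (w * t) * cos (w * t)) with hZdef
  have hlin : ∀ t : ℝ, HasDerivAt (fun s : ℝ => w * s) w t := by
    intro t; simpa using (hasDerivAt_id t).const_mul w
  have hZd : ∀ t, HasDerivAt Z ((X t ^ 2 + Y t ^ 2) * w) t := by
    intro t
    have hs := (Real.hasDerivAt_sin (w * t)).comp t (hlin t)
    have hc := (Real.hasDerivAt_cos (w * t)).comp t (hlin t)
    have h1 := (((hlin t).add (hs.mul hc)).const_mul ((x₀ ^ 2 + y₀ ^ 2) / 2))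
    have h2 := ((hs.pow 2).const_mul (x₀ * (u / w) + y₀ * (v / w)))
    have h3 := (((hlin t).sub (hs.mul hc)).const_mul (((u / w) ^ 2 + (v / w) ^ 2) / 2))
    have h4 := (((h1.const_add z₀).add h2).add h3)
    refine h4.congr_deriv (Eq.symm ?_)
    simp only [hXdef, hYdef, Function.comp]
    have pyth := Real.sin_sq_add_cos_sq (w * t)
    linear_combination ((x₀ ^ 2 + y₀ ^ 2) * w / 2 + ((u / w) ^ 2 + (v / w) ^ 2) * w / 2) * pyth
  have hz' : ∀ t, HasDerivAt (fun s => (E (s • ((u,v,w) : ℝ×ℝ×ℝ))).2.2) ((X t ^ 2 + Y t ^ 2) * w) t := by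
    intro t
    have := hz t
    simp only at this
    rw [hxall t, hyall t] at this
    exact this
  have hdiff : ∀ t, HasDerivAt (fun s => (E (s • ((u,v,w) : ℝ×ℝ×ℝ))).2.2 - Z s) 0 t := by
    intro t
    exact ((hz' t).sub (hZd t)).congr_deriv (sub_self _)
  have hconst : ∀ t, (E (t • ((u,v,w) : ℝ×ℝ×ℝ))).2.2 - Z t
      = (E ((0:ℝ) • ((u,v,w) : ℝ×ℝ×ℝ))).2.2 - Z 0 := by
    intro t
    exact is_const_of_deriv_eq_zero (fun s => (hdiff s).differentiableAt)
      (fun s => (hdiff s).deriv) t 0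
  have hZ0 : Z 0 = z₀ := by simp [hZdef]
  have hzf : ∀ t, (E (t • ((u,v,w) : ℝ×ℝ×ℝ))).2.2 = Z t := by
    intro t
    have := hconst t
    rw [hz0, hZ0] at this
    linarith
  have h1s : ((1:ℝ) • ((u, v, w) : ℝ × ℝ × ℝ)) = (u, v, w) := one_smul _ _
  have e1 : (E (u,v,w)).1 = x₀ * cos w + (u / w) * sin w := by
    have := hxall 1; rw [h1s] at this; simpa using this
  have e2 : (E (u,v,w)).2.1 = y₀ * cos w + (v / w) * sin w := by
    have := hyall 1; rw [h1s] at this; simpa using this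
  have e3 : (E (u,v,w)).2.2 = z₀ + ((x₀ ^ 2 + y₀ ^ 2) / 2) * (w + sin w * cos w)
        + (x₀ * (u / w) + y₀ * (v / w)) * sin w ^ 2
        + (((u / w) ^ 2 + (v / w) ^ 2) / 2) * (w - sin w * cos w) := by
    have := hzf 1; rw [h1s] at this; simpa [hZdef] using this
  exact Prod.ext e1 (Prod.ext e2 e3)

noncomputable def prodEquivFin3 : (ℝ × ℝ × ℝ) ≃ₗ[ℝ] (Fin 3 → ℝ) where
  toFun p := ![p.1, p.2.1, p.2.2]
  invFun f := (f 0, f 1, f 2)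
  map_add' p q := by funext i; fin_cases i <;> simp
  map_smul' c p := by funext i; fin_cases i <;> simp
  left_inv p := by simp
  right_inv f := by funext i; fin_cases i <;> simp

lemma det_clm_eq (D : (ℝ × ℝ × ℝ) →L[ℝ] (ℝ × ℝ × ℝ)) (a b c d e f g h i : ℝ)
    (h1 : D (1, 0, 0) = (a, d, g)) (h2 : D (0, 1, 0) = (b, e, h))
    (h3 : D (0, 0, 1) = (c, f, i)) :
    LinearMap.det D.toLinearMap = Matrix.det !![a, b, c; d, e, f; g, h, i] := by
  rw [← LinearMap.det_toLin' !![a, b, c; d, e, f; g, h, i]]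
  rw [← LinearMap.det_conj D.toLinearMap prodEquivFin3]
  congr 1
  apply LinearMap.ext
  intro x
  have hx : prodEquivFin3.symm x = x 0 • ((1:ℝ), (0:ℝ), (0:ℝ)) + x 1 • ((0:ℝ), (1:ℝ), (0:ℝ))
      + x 2 • ((0:ℝ), (0:ℝ), (1:ℝ)) := by
    simp [prodEquivFin3, Prod.ext_iff]
  simp only [LinearMap.comp_apply, LinearEquiv.coe_coe, hx]
  simp only [map_add, map_smul]
  simp only [ContinuousLinearMap.coe_coe, h1, h2, h3]
  funext j
  fin_cases j <;>
    simp [prodEquivFin3, Matrix.toLin'_apply, Matrix.mulVec, dotProduct, Matrix.vecHead, Matrix.vecTail,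
      Fin.sum_univ_three] <;> ring

set_option maxHeartbeats 2000000 in
lemma det_fderiv_eq (x₀ y₀ z₀ : ℝ) (E : ℝ × ℝ × ℝ → ℝ × ℝ × ℝ)
    (hsm : ContDiff ℝ 1 E)
    (hF : ∀ (u v w : ℝ), w ≠ 0 →
      E (u, v, w) = (x₀ * cos w + (u / w) * sin w,
        y₀ * cos w + (v / w) * sin w,
        z₀ + ((x₀ ^ 2 + y₀ ^ 2) / 2) * (w + sin w * cos w)
          + (x₀ * (u / w) + y₀ * (v / w)) * sin w ^ 2
          + (((u / w) ^ 2 + (v / w) ^ 2) / 2) * (w - sin w * cos w)))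
    (u v w : ℝ) (hw : w ≠ 0) :
    LinearMap.det (fderiv ℝ E (u, v, w)).toLinearMap
      = (sin w / w) * ((x₀ ^ 2 + y₀ ^ 2 + x₀ * u + y₀ * v) * (sin w / w)
          + (u ^ 2 + v ^ 2) * ((sin w - w * cos w) / w ^ 3)) := by
  set a11 : ℝ := sin w / w with ha11
  set a13 : ℝ := -x₀ * sin w + u * (cos w * w - sin w) / w ^ 2 with ha13
  set a23 : ℝ := -y₀ * sin w + v * (cos w * w - sin w) / w ^ 2 with ha23
  set a31 : ℝ := x₀ * sin w ^ 2 / w + u * (w - sin w * cos w) / w ^ 2 with ha31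
  set a32 : ℝ := y₀ * sin w ^ 2 / w + v * (w - sin w * cos w) / w ^ 2 with ha32
  set a33 : ℝ := ((x₀ ^ 2 + y₀ ^ 2) / 2) * (1 + cos w ^ 2 - sin w ^ 2)
      + (x₀ * u + y₀ * v) * sin w * (2 * cos w * w - sin w) / w ^ 2
      + (u ^ 2 + v ^ 2) * ((1 - cos w ^ 2 + sin w ^ 2) / (2 * w ^ 2)
          - (w - sin w * cos w) / w ^ 3) with ha33
  have hdiffE : DifferentiableAt ℝ E (u, v, w) := (hsm.differentiable one_ne_zero) _
  -- column 1
  have col1 : (fderiv ℝ E (u, v, w)) (1, 0, 0) = (a11, 0, a31) := by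
    have hg : HasDerivAt (fun s : ℝ => ((u + s, v, w) : ℝ × ℝ × ℝ)) (1, 0, 0) 0 :=
      (((hasDerivAt_id 0).const_add u).prodMk
        ((hasDerivAt_const 0 v).prodMk (hasDerivAt_const 0 w)))
    have hEd : HasFDerivAt E (fderiv ℝ E (u, v, w))
        ((fun s : ℝ => ((u + s, v, w) : ℝ × ℝ × ℝ)) 0) := by
      rw [show ((fun s : ℝ => ((u + s, v, w) : ℝ × ℝ × ℝ)) 0) = (u, v, w) by norm_num]
      exact hdiffE.hasFDerivAt
    have hcomp := hEd.comp_hasDerivAt 0 hg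
    have heq : (fun s : ℝ => E (u + s, v, w)) = fun s : ℝ =>
        ((x₀ * cos w + ((u + s) / w) * sin w,
          y₀ * cos w + (v / w) * sin w,
          z₀ + ((x₀ ^ 2 + y₀ ^ 2) / 2) * (w + sin w * cos w)
            + (x₀ * ((u + s) / w) + y₀ * (v / w)) * sin w ^ 2
            + ((((u + s) / w) ^ 2 + (v / w) ^ 2) / 2) * (w - sin w * cos w)) : ℝ × ℝ × ℝ) :=
      funext fun s => hF (u + s) v w hw
    have hexp : HasDerivAt (fun s : ℝ => E (u + s, v, w)) (a11, 0, a31) 0 := by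
      rw [heq]
      have hid : HasDerivAt (fun s : ℝ => u + s) 1 0 := (hasDerivAt_id 0).const_add u
      have hdiv := hid.div_const w
      have h1 : HasDerivAt (fun s : ℝ => x₀ * cos w + ((u + s) / w) * sin w) a11 0 := by
        have := (hdiv.mul_const (sin w)).const_add (x₀ * cos w)
        refine this.congr_deriv (Eq.symm ?_)
        rw [ha11]; ring
      have h2 : HasDerivAt (fun s : ℝ => y₀ * cos w + (v / w) * sin w) (0 : ℝ) 0 :=
        hasDerivAt_const _ _
      have h3 : HasDerivAt (fun s : ℝ =>
          z₀ + ((x₀ ^ 2 + y₀ ^ 2) / 2) * (w + sin w * cos w)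
            + (x₀ * ((u + s) / w) + y₀ * (v / w)) * sin w ^ 2
            + ((((u + s) / w) ^ 2 + (v / w) ^ 2) / 2) * (w - sin w * cos w)) a31 0 := by
        have hB := ((hdiv.const_mul x₀).add_const (y₀ * (v / w))).mul_const (sin w ^ 2)
        have hC := (((hdiv.pow 2).add_const ((v / w) ^ 2)).div_const 2).mul_const
          (w - sin w * cos w)
        have := ((hB.const_add (z₀ + ((x₀ ^ 2 + y₀ ^ 2) / 2) * (w + sin w * cos w))).add hC)
        refine this.congr_deriv (Eq.symm ?_)
        rw [ha31]; simp only [add_zero, Pi.add_apply, Pi.pow_apply, Pi.sub_apply, Pi.mul_apply, Nat.reduceSub, pow_one]; field_simp; ring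
      exact h1.prodMk (h2.prodMk h3)
    exact hcomp.unique hexp
  -- column 2
  have col2 : (fderiv ℝ E (u, v, w)) (0, 1, 0) = (0, a11, a32) := by
    have hg : HasDerivAt (fun s : ℝ => ((u, v + s, w) : ℝ × ℝ × ℝ)) (0, 1, 0) 0 :=
      ((hasDerivAt_const 0 u).prodMk
        (((hasDerivAt_id 0).const_add v).prodMk (hasDerivAt_const 0 w)))
    have hEd : HasFDerivAt E (fderiv ℝ E (u, v, w))
        ((fun s : ℝ => ((u, v + s, w) : ℝ × ℝ × ℝ)) 0) := by
      rw [show ((fun s : ℝ => ((u, v + s, w) : ℝ × ℝ × ℝ)) 0) = (u, v, w) by norm_num]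
      exact hdiffE.hasFDerivAt
    have hcomp := hEd.comp_hasDerivAt 0 hg
    have heq : (fun s : ℝ => E (u, v + s, w)) = fun s : ℝ =>
        ((x₀ * cos w + (u / w) * sin w,
          y₀ * cos w + ((v + s) / w) * sin w,
          z₀ + ((x₀ ^ 2 + y₀ ^ 2) / 2) * (w + sin w * cos w)
            + (x₀ * (u / w) + y₀ * ((v + s) / w)) * sin w ^ 2
            + (((u / w) ^ 2 + ((v + s) / w) ^ 2) / 2) * (w - sin w * cos w)) : ℝ × ℝ × ℝ) :=
      funext fun s => hF u (v + s) w hw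
    have hexp : HasDerivAt (fun s : ℝ => E (u, v + s, w)) (0, a11, a32) 0 := by
      rw [heq]
      have hid : HasDerivAt (fun s : ℝ => v + s) 1 0 := (hasDerivAt_id 0).const_add v
      have hdiv := hid.div_const w
      have h1 : HasDerivAt (fun s : ℝ => x₀ * cos w + (u / w) * sin w) (0 : ℝ) 0 :=
        hasDerivAt_const _ _
      have h2 : HasDerivAt (fun s : ℝ => y₀ * cos w + ((v + s) / w) * sin w) a11 0 := by
        have := (hdiv.mul_const (sin w)).const_add (y₀ * cos w)
        refine this.congr_deriv (Eq.symm ?_)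
        rw [ha11]; ring
      have h3 : HasDerivAt (fun s : ℝ =>
          z₀ + ((x₀ ^ 2 + y₀ ^ 2) / 2) * (w + sin w * cos w)
            + (x₀ * (u / w) + y₀ * ((v + s) / w)) * sin w ^ 2
            + (((u / w) ^ 2 + ((v + s) / w) ^ 2) / 2) * (w - sin w * cos w)) a32 0 := by
        have hB := ((hdiv.const_mul y₀).const_add (x₀ * (u / w))).mul_const (sin w ^ 2)
        have hC := (((hdiv.pow 2).const_add ((u / w) ^ 2)).div_const 2).mul_const
          (w - sin w * cos w)
        have := ((hB.const_add (z₀ + ((x₀ ^ 2 + y₀ ^ 2) / 2) * (w + sin w * cos w))).add hC)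
        refine this.congr_deriv (Eq.symm ?_)
        rw [ha32]; simp only [add_zero, Pi.add_apply, Pi.pow_apply, Pi.sub_apply, Pi.mul_apply, Nat.reduceSub, pow_one]; field_simp; ring
      exact h1.prodMk (h2.prodMk h3)
    exact hcomp.unique hexp
  -- column 3
  have col3 : (fderiv ℝ E (u, v, w)) (0, 0, 1) = (a13, a23, a33) := by
    have hg : HasDerivAt (fun s : ℝ => ((u, v, w + s) : ℝ × ℝ × ℝ)) (0, 0, 1) 0 :=
      ((hasDerivAt_const 0 u).prodMk
        ((hasDerivAt_const 0 v).prodMk ((hasDerivAt_id 0).const_add w)))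
    have hEd : HasFDerivAt E (fderiv ℝ E (u, v, w))
        ((fun s : ℝ => ((u, v, w + s) : ℝ × ℝ × ℝ)) 0) := by
      rw [show ((fun s : ℝ => ((u, v, w + s) : ℝ × ℝ × ℝ)) 0) = (u, v, w) by norm_num]
      exact hdiffE.hasFDerivAt
    have hcomp := hEd.comp_hasDerivAt 0 hg
    have hne : ∀ᶠ s : ℝ in nhds 0, w + s ≠ 0 := by
      have hc : ContinuousAt (fun s : ℝ => w + s) 0 := by fun_prop
      have := hc.eventually_ne (by simpa using hw)
      simpa using this
    have heq : (fun s : ℝ =>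
        ((x₀ * cos (w + s) + (u / (w + s)) * sin (w + s),
          y₀ * cos (w + s) + (v / (w + s)) * sin (w + s),
          z₀ + ((x₀ ^ 2 + y₀ ^ 2) / 2) * ((w + s) + sin (w + s) * cos (w + s))
            + (x₀ * (u / (w + s)) + y₀ * (v / (w + s))) * sin (w + s) ^ 2
            + (((u / (w + s)) ^ 2 + (v / (w + s)) ^ 2) / 2)
                * ((w + s) - sin (w + s) * cos (w + s))) : ℝ × ℝ × ℝ))
        =ᶠ[nhds 0] (fun s : ℝ => E (u, v, w + s)) := by
      filter_upwards [hne] with s hs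
      exact (hF u v (w + s) hs).symm
    have hω : HasDerivAt (fun s : ℝ => w + s) 1 0 := (hasDerivAt_id 0).const_add w
    have hw0 : w + 0 ≠ 0 := by simpa using hw
    have hsin : HasDerivAt (fun s : ℝ => sin (w + s)) (cos (w + 0) * 1) 0 :=
      (Real.hasDerivAt_sin (w + 0)).comp 0 hω
    have hcos : HasDerivAt (fun s : ℝ => cos (w + s)) (-sin (w + 0) * 1) 0 :=
      (Real.hasDerivAt_cos (w + 0)).comp 0 hω
    have hdu : HasDerivAt (fun s : ℝ => u / (w + s))
        ((0 * (w + 0) - u * 1) / (w + 0) ^ 2) 0 := (hasDerivAt_const 0 u).div hω hw0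
    have hdv : HasDerivAt (fun s : ℝ => v / (w + s))
        ((0 * (w + 0) - v * 1) / (w + 0) ^ 2) 0 := (hasDerivAt_const 0 v).div hω hw0
    have h1 : HasDerivAt (fun s : ℝ => x₀ * cos (w + s) + (u / (w + s)) * sin (w + s)) a13 0 := by
      have := (hcos.const_mul x₀).add (hdu.mul hsin)
      refine this.congr_deriv (Eq.symm ?_)
      rw [ha13]; simp only [add_zero]; field_simp; ring
    have h2 : HasDerivAt (fun s : ℝ => y₀ * cos (w + s) + (v / (w + s)) * sin (w + s)) a23 0 := by
      have := (hcos.const_mul y₀).add (hdv.mul hsin)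
      refine this.congr_deriv (Eq.symm ?_)
      rw [ha23]; simp only [add_zero]; field_simp; ring
    have h3 : HasDerivAt (fun s : ℝ =>
        z₀ + ((x₀ ^ 2 + y₀ ^ 2) / 2) * ((w + s) + sin (w + s) * cos (w + s))
          + (x₀ * (u / (w + s)) + y₀ * (v / (w + s))) * sin (w + s) ^ 2
          + (((u / (w + s)) ^ 2 + (v / (w + s)) ^ 2) / 2)
              * ((w + s) - sin (w + s) * cos (w + s))) a33 0 := by
      have hA := ((hω.add (hsin.mul hcos)).const_mul ((x₀ ^ 2 + y₀ ^ 2) / 2)).const_add z₀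
      have hB := ((hdu.const_mul x₀).add (hdv.const_mul y₀)).mul (hsin.pow 2)
      have hC := (((hdu.pow 2).add (hdv.pow 2)).div_const 2).mul (hω.sub (hsin.mul hcos))
      have := (hA.add hB).add hC
      refine this.congr_deriv (Eq.symm ?_)
      rw [ha33]; simp only [add_zero, Pi.add_apply, Pi.pow_apply, Pi.sub_apply, Pi.mul_apply, Nat.reduceSub, pow_one]; field_simp; ring
    have hexp : HasDerivAt (fun s : ℝ => E (u, v, w + s)) (a13, a23, a33) 0 :=
      (h1.prodMk (h2.prodMk h3)).congr_of_eventuallyEq heq.symm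
    exact hcomp.unique hexp
  -- assemble
  rw [det_clm_eq (fderiv ℝ E (u, v, w)) a11 0 a13 0 a11 a23 a31 a32 a33 col1 col2 col3]
  rw [Matrix.det_fin_three]
  norm_num [Matrix.cons_val_zero, Matrix.cons_val_one, Matrix.head_cons, Matrix.cons_val_two,
    Matrix.tail_cons]
  have pyth := Real.sin_sq_add_cos_sq w
  rw [ha11, ha13, ha23, ha31, ha32, ha33]
  field_simp
  linear_combination (((sin w ^ 2 / w ^ 2) * ((u ^ 2 + v ^ 2) / (2 * w ^ 2)
    + (x₀ ^ 2 + y₀ ^ 2) / 2)) * (2 * w ^ 6)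
    + sin w ^ 2 * (x₀ ^ 2 + y₀ ^ 2) * (2 * w ^ 24 - w ^ 6 * (w : ℝ)⁻¹ ^ 2)
    + sin w ^ 2 * (u ^ 2 + v ^ 2) * (2 * w ^ 22 - w ^ 6 * (w : ℝ)⁻¹ ^ 4)
    + sin w ^ 2 * ((u ^ 2 + v ^ 2) * (w - 2 * w ^ 22) + (x₀ ^ 2 + y₀ ^ 2) * (w ^ 3 - 2 * w ^ 24))) * pyth

lemma aux_B {θ : ℝ} (h : θ ∈ Set.Ioo 0 π) : 0 < sin θ - θ * cos θ := by
  have hd : ∀ x : ℝ, HasDerivAt (fun y => sin y - y * cos y) (x * sin x) x := by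
    intro x
    have := (Real.hasDerivAt_sin x).sub ((hasDerivAt_id x).mul (Real.hasDerivAt_cos x))
    refine this.congr_deriv (Eq.symm ?_); simp only [id_eq]; ring
  have hmono : StrictMonoOn (fun y => sin y - y * cos y) (Set.Icc 0 π) := by
    apply strictMonoOn_of_deriv_pos (convex_Icc 0 π)
    · exact Continuous.continuousOn (by fun_prop)
    · intro x hx
      rw [interior_Icc] at hx
      rw [(hd x).deriv]
      exact mul_pos hx.1 (Real.sin_pos_of_pos_of_lt_pi hx.1 hx.2)
  have := hmono (Set.mem_Icc.2 ⟨le_refl 0, Real.pi_pos.le⟩)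
    (Set.mem_Icc.2 ⟨h.1.le, h.2.le⟩) h.1
  simpa using this

lemma aux_phi {θ : ℝ} (h : θ ∈ Set.Ioo 0 π) : θ ^ 2 * sin θ < 4 * (sin θ - θ * cos θ) := by
  have hd : ∀ x : ℝ, HasDerivAt (fun y => (4 - y ^ 2) * sin y - 4 * y * cos y)
      (x * (2 * sin x - x * cos x)) x := by
    intro x
    have h1 := (((hasDerivAt_id x).pow 2).const_sub 4).mul (Real.hasDerivAt_sin x)
    have h2 := (((hasDerivAt_id x).const_mul 4)).mul (Real.hasDerivAt_cos x)
    have := h1.sub h2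
    refine this.congr_deriv (Eq.symm ?_); simp only [id_eq, Pi.pow_apply]; ring
  have hmono : StrictMonoOn (fun y => (4 - y ^ 2) * sin y - 4 * y * cos y) (Set.Icc 0 π) := by
    apply strictMonoOn_of_deriv_pos (convex_Icc 0 π)
    · exact Continuous.continuousOn (by fun_prop)
    · intro x hx
      rw [interior_Icc] at hx
      rw [(hd x).deriv]
      have hb := aux_B hx
      have hs := Real.sin_pos_of_pos_of_lt_pi hx.1 hx.2
      have : 0 < 2 * sin x - x * cos x := by nlinarith
      exact mul_pos hx.1 this
  have := hmono (Set.mem_Icc.2 ⟨le_refl 0, Real.pi_pos.le⟩)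
    (Set.mem_Icc.2 ⟨h.1.le, h.2.le⟩) h.1
  simp only [sin_zero, cos_zero] at this
  nlinarith [this]

lemma quad_pos (a l m A B : ℝ) (ha : 0 < a) (hm : 0 ≤ m) (hl : l ^ 2 ≤ a * m)
    (hA : 0 < A) (hB : 0 < B) (hAB : A < 4 * B) : 0 < a * A + l * A + m * B := by
  by_contra hcon
  push_neg at hcon
  have hpos : 0 < A * a + B * m := by positivity
  have h1 : A * a + B * m ≤ A * (-l) := by nlinarith
  have h2 : (A * a + B * m) ^ 2 ≤ A ^ 2 * (a * m) := by nlinarith [sq_nonneg (A * l)]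
  have h3 : 4 * A * B * (a * m) ≤ (A * a + B * m) ^ 2 := by nlinarith [sq_nonneg (A * a - B * m)]
  have ham : 0 ≤ a * m := mul_nonneg ha.le hm
  have h4 : a * m * (4 * B - A) ≤ 0 := by nlinarith
  have h5 : a * m = 0 := by nlinarith
  have hm0 : m = 0 := by
    rcases mul_eq_zero.mp h5 with h | h
    · exact absurd h ha.ne'
    · exact h
  have hl0 : l = 0 := by nlinarith [sq_nonneg l]
  nlinarith

lemma lim_sin_div : Tendsto (fun w : ℝ => sin w / w) (nhdsWithin 0 {(0:ℝ)}ᶜ) (nhds 1) := by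
  have h := hasDerivAt_iff_tendsto_slope.mp (Real.hasDerivAt_sin 0)
  rw [Real.cos_zero] at h
  refine h.congr' ?_
  filter_upwards with x
  simp [slope_def_field, div_eq_mul_inv]

lemma lim_cube : Tendsto (fun w : ℝ => (sin w - w * cos w) / w ^ 3)
    (nhdsWithin 0 {(0:ℝ)}ᶜ) (nhds (1 / 3)) := by
  apply HasDerivAt.lhopital_zero_nhdsNE (f' := fun x => x * sin x) (g' := fun x => 3 * x ^ 2)
  · filter_upwards with x
    have := (Real.hasDerivAt_sin x).sub ((hasDerivAt_id x).mul (Real.hasDerivAt_cos x))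
    refine this.congr_deriv (Eq.symm ?_); simp only [id_eq]; ring
  · filter_upwards with x
    have h := hasDerivAt_pow 3 x
    norm_num at h
    exact h
  · filter_upwards [self_mem_nhdsWithin] with x hx
    have : x ≠ 0 := hx
    positivity
  · have : Tendsto (fun w : ℝ => sin w - w * cos w) (nhds 0) (nhds 0) := by
      have : Continuous (fun w : ℝ => sin w - w * cos w) := by fun_prop
      simpa using this.tendsto 0
    exact this.mono_left nhdsWithin_le_nhds
  · have : Tendsto (fun w : ℝ => w ^ 3) (nhds (0:ℝ)) (nhds 0) := by
      have : Continuous (fun w : ℝ => w ^ 3) := by fun_prop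
      simpa using this.tendsto 0
    exact this.mono_left nhdsWithin_le_nhds
  · -- (x * sin x) / (3 * x^2) → 1/3
    have heq : ∀ᶠ x : ℝ in nhdsWithin 0 {(0:ℝ)}ᶜ,
        sin x / x * (1/3) = (x * sin x) / (3 * x ^ 2) := by
      filter_upwards [self_mem_nhdsWithin] with x hx
      have hx0 : x ≠ 0 := hx
      field_simp
    have := (lim_sin_div.mul_const (1/3 : ℝ)).congr' heq
    simpa using this

lemma main_pos (x₀ y₀ p q θ : ℝ) (hq : 0 < x₀ ^ 2 + y₀ ^ 2)
    (hθ : θ ∈ Set.Ioo 0 π) :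
    0 < (sin θ / θ) * ((x₀ ^ 2 + y₀ ^ 2 + x₀ * p + y₀ * q) * (sin θ / θ)
        + (p ^ 2 + q ^ 2) * ((sin θ - θ * cos θ) / θ ^ 3)) := by
  have hθ0 : 0 < θ := hθ.1
  have hs : 0 < sin θ := Real.sin_pos_of_pos_of_lt_pi hθ.1 hθ.2
  have hB := aux_B hθ
  have hA : 0 < θ ^ 2 * sin θ := by positivity
  have hAB := aux_phi hθ
  have hcs : (x₀ * p + y₀ * q) ^ 2 ≤ (x₀ ^ 2 + y₀ ^ 2) * (p ^ 2 + q ^ 2) := by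
    nlinarith [sq_nonneg (x₀ * q - y₀ * p)]
  have hN := quad_pos (x₀ ^ 2 + y₀ ^ 2) (x₀ * p + y₀ * q) (p ^ 2 + q ^ 2)
    (θ ^ 2 * sin θ) (sin θ - θ * cos θ) hq (by positivity) hcs hA hB hAB
  have heq : (sin θ / θ) * ((x₀ ^ 2 + y₀ ^ 2 + x₀ * p + y₀ * q) * (sin θ / θ)
        + (p ^ 2 + q ^ 2) * ((sin θ - θ * cos θ) / θ ^ 3))
      = sin θ * ((x₀ ^ 2 + y₀ ^ 2) * (θ ^ 2 * sin θ) + (x₀ * p + y₀ * q) * (θ ^ 2 * sin θ)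
          + (p ^ 2 + q ^ 2) * (sin θ - θ * cos θ)) / θ ^ 4 := by
    field_simp
    ring
  rw [heq]
  positivity
lemma main_pos' (x₀ y₀ p q θ : ℝ) (hq : 0 < x₀ ^ 2 + y₀ ^ 2)
    (hθ0 : θ ≠ 0) (hθπ : |θ| < π) :
    0 < (sin θ / θ) * ((x₀ ^ 2 + y₀ ^ 2 + x₀ * p + y₀ * q) * (sin θ / θ)
        + (p ^ 2 + q ^ 2) * ((sin θ - θ * cos θ) / θ ^ 3)) := by
  rcases hθ0.lt_or_gt with h | h
  · have h2 := main_pos x₀ y₀ p q (-θ) hq ⟨by linarith, by rwa [abs_of_neg h] at hθπ⟩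
    have heq : (sin (-θ) / (-θ)) * ((x₀ ^ 2 + y₀ ^ 2 + x₀ * p + y₀ * q) * (sin (-θ) / (-θ))
        + (p ^ 2 + q ^ 2) * ((sin (-θ) - (-θ) * cos (-θ)) / (-θ) ^ 3))
        = (sin θ / θ) * ((x₀ ^ 2 + y₀ ^ 2 + x₀ * p + y₀ * q) * (sin θ / θ)
        + (p ^ 2 + q ^ 2) * ((sin θ - θ * cos θ) / θ ^ 3)) := by
      rw [Real.sin_neg, Real.cos_neg, show ((-θ) ^ 3 : ℝ) = -(θ ^ 3) by ring,
        neg_div_neg_eq, div_neg]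
      ring
    rwa [heq] at h2
  · exact main_pos x₀ y₀ p q θ hq ⟨h, by rwa [abs_of_pos h] at hθπ⟩

/-- for the radial Grushin structure with `f(r) = r` and a Riemannian
point `q₀`, the first conjugate time of an arc-length parametrized geodesic with
initial covector `(u₀,v₀,w₀)` on the unit energy shell is `π/|w₀|`: the exponential
map `E = Exp_{q₀}` has no critical point at `t·λ₀` for `0 < t < π/|w₀|` and a
critical point at `t = π/|w₀|`; for `w₀ = 0` there is no conjugate time. -/
theorem grushin_conjugate_time
    (x₀ y₀ z₀ : ℝ) (hq : 0 < x₀ ^ 2 + y₀ ^ 2)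
    (E : ℝ × ℝ × ℝ → ℝ × ℝ × ℝ)
    (hsm : ContDiff ℝ 1 E)
    (hE0 : E 0 = (x₀, y₀, z₀))
    (hgeo : ∀ lam : ℝ × ℝ × ℝ, IsGrushinGeodesic (fun t => E (t • lam)) lam)
    (u₀ v₀ w₀ : ℝ)
    (hshell : u₀ ^ 2 + v₀ ^ 2 + (x₀ ^ 2 + y₀ ^ 2) * w₀ ^ 2 = 1) :
    (w₀ ≠ 0 →
      (∀ t ∈ Set.Ioo (0:ℝ) (Real.pi / |w₀|),
        LinearMap.det ((fderiv ℝ E (t • ((u₀, v₀, w₀) : ℝ × ℝ × ℝ))).toLinearMap) ≠ 0) ∧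
      LinearMap.det
        ((fderiv ℝ E ((Real.pi / |w₀|) • ((u₀, v₀, w₀) : ℝ × ℝ × ℝ))).toLinearMap) = 0) ∧
    (w₀ = 0 → ∀ t : ℝ, 0 < t →
      LinearMap.det ((fderiv ℝ E (t • ((u₀, v₀, w₀) : ℝ × ℝ × ℝ))).toLinearMap) ≠ 0) := by
  have hF : ∀ (u v w : ℝ), w ≠ 0 →
      E (u, v, w) = (x₀ * cos w + (u / w) * sin w,
        y₀ * cos w + (v / w) * sin w,
        z₀ + ((x₀ ^ 2 + y₀ ^ 2) / 2) * (w + sin w * cos w)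
          + (x₀ * (u / w) + y₀ * (v / w)) * sin w ^ 2
          + (((u / w) ^ 2 + (v / w) ^ 2) / 2) * (w - sin w * cos w)) :=
    fun u v w hw => grushin_E_formula x₀ y₀ z₀ E hE0 hgeo u v w hw
  have hdet : ∀ (u v w : ℝ), w ≠ 0 →
      LinearMap.det (fderiv ℝ E (u, v, w)).toLinearMap
        = (sin w / w) * ((x₀ ^ 2 + y₀ ^ 2 + x₀ * u + y₀ * v) * (sin w / w)
            + (u ^ 2 + v ^ 2) * ((sin w - w * cos w) / w ^ 3)) :=
    fun u v w hw => det_fderiv_eq x₀ y₀ z₀ E hsm hF u v w hw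
  constructor
  · intro hw0
    have habs : 0 < |w₀| := abs_pos.mpr hw0
    constructor
    · intro t ht
      obtain ⟨ht0, htπ⟩ := ht
      have hpt : (t • ((u₀, v₀, w₀) : ℝ × ℝ × ℝ)) = (t * u₀, t * v₀, t * w₀) := rfl
      rw [hpt, hdet (t * u₀) (t * v₀) (t * w₀) (mul_ne_zero ht0.ne' hw0)]
      have hθabs : |t * w₀| < π := by
        rw [abs_mul, abs_of_pos ht0]
        calc t * |w₀| < (π / |w₀|) * |w₀| := by
              exact mul_lt_mul_of_pos_right htπ habs
          _ = π := by field_simp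
      exact (main_pos' x₀ y₀ (t * u₀) (t * v₀) (t * w₀) hq
        (mul_ne_zero ht0.ne' hw0) hθabs).ne'
    · have hpt : ((π / |w₀|) • ((u₀, v₀, w₀) : ℝ × ℝ × ℝ))
          = (π / |w₀| * u₀, π / |w₀| * v₀, π / |w₀| * w₀) := rfl
      have hne : π / |w₀| * w₀ ≠ 0 :=
        mul_ne_zero (div_ne_zero Real.pi_ne_zero habs.ne') hw0
      rw [hpt, hdet _ _ _ hne]
      have hsin : sin (π / |w₀| * w₀) = 0 := by
        rcases hw0.lt_or_gt with h | h
        · rw [show π / |w₀| * w₀ = -π by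
            rw [abs_of_neg h, div_neg, neg_mul, div_mul_cancel₀ _ hw0]]
          simp
        · rw [show π / |w₀| * w₀ = π by rw [abs_of_pos h, div_mul_cancel₀ _ hw0]]
          simp
      rw [hsin]
      simp
  · intro h0 t ht
    subst h0
    have hpt : (t • ((u₀, v₀, (0:ℝ)) : ℝ × ℝ × ℝ)) = (t * u₀, t * v₀, (0:ℝ)) := by
      show (t * u₀, t * v₀, t * 0) = (t * u₀, t * v₀, (0:ℝ))
      rw [mul_zero]
    rw [hpt]
    set φ : ℝ → ℝ := fun w => LinearMap.det (fderiv ℝ E (t * u₀, t * v₀, w)).toLinearMap with hφ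
    have hφcont : Continuous φ := by
      have h1 : Continuous (fderiv ℝ E) := hsm.continuous_fderiv one_ne_zero
      have h2 : Continuous (fun w : ℝ => ((t * u₀, t * v₀, w) : ℝ × ℝ × ℝ)) := by fun_prop
      exact ContinuousLinearMap.continuous_det.comp (h1.comp h2)
    set c : ℝ := (x₀ ^ 2 + y₀ ^ 2 + x₀ * (t * u₀) + y₀ * (t * v₀)) * 1
        + ((t * u₀) ^ 2 + (t * v₀) ^ 2) * (1 / 3) with hc
    have htend2 : Tendsto φ (nhdsWithin 0 {(0:ℝ)}ᶜ) (nhds (1 * c)) := by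
      have hbase : Tendsto (fun w : ℝ => (sin w / w)
          * ((x₀ ^ 2 + y₀ ^ 2 + x₀ * (t * u₀) + y₀ * (t * v₀)) * (sin w / w)
            + ((t * u₀) ^ 2 + (t * v₀) ^ 2) * ((sin w - w * cos w) / w ^ 3)))
          (nhdsWithin 0 {(0:ℝ)}ᶜ) (nhds (1 * c)) := by
        rw [hc]
        exact lim_sin_div.mul ((lim_sin_div.const_mul _).add (lim_cube.const_mul _))
      refine hbase.congr' ?_
      filter_upwards [self_mem_nhdsWithin] with w hw
      exact (hdet (t * u₀) (t * v₀) w hw).symm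
    have htend1 : Tendsto φ (nhdsWithin 0 {(0:ℝ)}ᶜ) (nhds (φ 0)) :=
      (hφcont.tendsto 0).mono_left nhdsWithin_le_nhds
    have hc0 : φ 0 = 1 * c := tendsto_nhds_unique htend1 htend2
    have hcpos : 0 < c := by
      rw [hc]
      nlinarith [sq_nonneg (x₀ * (t * v₀) - y₀ * (t * u₀)), sq_nonneg (3 * (x₀ ^ 2 + y₀ ^ 2)
        - ((t * u₀) ^ 2 + (t * v₀) ^ 2)), sq_nonneg (t * u₀), sq_nonneg (t * v₀)]
    have : φ 0 ≠ 0 := by rw [hc0]; simpa using hcpos.ne'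
    exact this

end
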